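/- If a labeled graph G on [n] is 12-represented by a word in which each letter occurs at most twice, and G has b bad vertices, then G admits a 12-representant of length exactly n + b, namely one in which every good vertex occurs exactly once and every bad vertex occurs exactly twice. -/

import Mathlib

/-- Some occurrence of `i` comes strictly before some occurrence of `j` in `w`. -/
def Occ {n : ℕ} (w : List (Fin n)) (i j : Fin n) : Prop :=
  ∃ p q : Fin w.length, p < q ∧ w.get p = i ∧ w.get q = j

/-- The word `w` over `[n]` 12-represents the labeled graph `G` on `Fin n`:
every letter occurs at least once, and for `i < j`, `i` and `j` are adjacent
iff no occurrence of `i` comes before any occurrence of `j`. -/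
def Represents {n : ℕ} (G : SimpleGraph (Fin n)) (w : List (Fin n)) : Prop :=
  (∀ v : Fin n, v ∈ w) ∧ ∀ i j : Fin n, i < j → (G.Adj i j ↔ ¬ Occ w i j)

/-- `b` is a bad vertex of `G`. -/
def Bad {n : ℕ} (G : SimpleGraph (Fin n)) (b : Fin n) : Prop :=
  ∃ a c : Fin n, a < b ∧ b < c ∧ ¬ G.Adj a b ∧ ¬ G.Adj b c ∧ G.Adj a c

section helpers

lemma mem_of_getElem?' {α : Type*} {w : List α} {p : ℕ} {a : α} (h : w[p]? = some a) : a ∈ w :=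
  List.mem_iff_getElem?.2 ⟨p, h⟩

variable {α : Type*}

lemma sublist_pair_of : ∀ {w : List α} {i j : α} {p q : ℕ}, p < q →
    w[p]? = some i → w[q]? = some j → List.Sublist [i, j] w := by
  intro w
  induction w with
  | nil => intro i j p q _ hp _; simp at hp
  | cons a w ih =>
    intro i j p q hpq hp hq
    match p, q with
    | 0, q + 1 =>
      simp only [List.getElem?_cons_zero, Option.some_inj] at hp
      subst hp
      simp only [List.getElem?_cons_succ] at hq
      have hj : j ∈ w := mem_of_getElem?' hq
      exact List.cons_sublist_cons.2 (List.singleton_sublist.2 hj)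
    | p + 1, q + 1 =>
      simp only [List.getElem?_cons_succ] at hp hq
      exact (ih (by omega) hp hq).cons a

lemma pair_indices_of_sublist : ∀ {w : List α} {i j : α}, List.Sublist [i, j] w →
    ∃ p q : ℕ, p < q ∧ w[p]? = some i ∧ w[q]? = some j := by
  intro w
  induction w with
  | nil => intro i j h; simp at h
  | cons a w ih =>
    intro i j h
    cases h with
    | cons _ h =>
      obtain ⟨p, q, h1, h2, h3⟩ := ih h
      exact ⟨p + 1, q + 1, by omega, by simpa, by simpa⟩
    | cons_cons _ h =>
      obtain ⟨q, hq⟩ := List.mem_iff_getElem?.1 (List.singleton_sublist.1 h)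
      exact ⟨0, q + 1, by omega, by simp, by simpa⟩

lemma mem_take_iff {w : List α} {k : ℕ} {x : α} :
    x ∈ w.take k ↔ ∃ p, p < k ∧ w[p]? = some x := by
  rw [List.mem_iff_getElem?]
  constructor
  · rintro ⟨p, hp⟩
    rw [List.getElem?_take] at hp
    by_cases h : p < k
    · exact ⟨p, h, by simpa [h] using hp⟩
    · simp [h] at hp
  · rintro ⟨p, h1, h2⟩
    exact ⟨p, by simp [List.getElem?_take, h1, h2]⟩

lemma mem_drop_iff {w : List α} {k : ℕ} {x : α} :
    x ∈ w.drop k ↔ ∃ p, k ≤ p ∧ w[p]? = some x := by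
  rw [List.mem_iff_getElem?]
  constructor
  · rintro ⟨p, hp⟩
    rw [List.getElem?_drop] at hp
    exact ⟨k + p, by omega, hp⟩
  · rintro ⟨p, h1, h2⟩
    refine ⟨p - k, ?_⟩
    rw [List.getElem?_drop]
    have : k + (p - k) = p := by omega
    rw [this]; exact h2

/-- some occurrence of `y` precedes all occurrences of `x`. -/
def Prec (w : List α) (y x : α) : Prop :=
  ∃ q : ℕ, w[q]? = some y ∧ ∀ p : ℕ, w[p]? = some x → q < p

/-- some occurrence of `x` follows all occurrences of `y`. -/
def RPrec (w : List α) (x y : α) : Prop :=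
  ∃ p : ℕ, w[p]? = some x ∧ ∀ q : ℕ, w[q]? = some y → q < p

lemma prec_filter {P : α → Bool} {y x : α} (hx : P x = true) :
    ∀ {w : List α}, Prec (w.filter P) y x → Prec w y x := by
  intro w
  induction w with
  | nil => simp [Prec]
  | cons a w ih =>
    intro h
    by_cases hpa : P a
    · rw [List.filter_cons_of_pos hpa] at h
      obtain ⟨q, hq, hall⟩ := h
      match q with
      | 0 =>
        simp only [List.getElem?_cons_zero, Option.some_inj] at hq
        subst hq
        have hax : a ≠ x := by
          intro h; exact absurd (hall 0 (by simp [h])) (by omega)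
        refine ⟨0, by simp, ?_⟩
        intro p hp
        match p with
        | 0 => simp only [List.getElem?_cons_zero, Option.some_inj] at hp; exact absurd hp hax
        | p + 1 => omega
      | q + 1 =>
        simp only [List.getElem?_cons_succ] at hq
        have hax : a ≠ x := by
          intro h; exact absurd (hall 0 (by simp [h])) (by omega)
        obtain ⟨q', hq', hall'⟩ := ih ⟨q, hq, fun p hp => by
          have := hall (p + 1) (by simpa using hp); omega⟩
        refine ⟨q' + 1, by simpa using hq', ?_⟩
        intro p hp
        match p with
        | 0 => simp only [List.getElem?_cons_zero, Option.some_inj] at hp; exact absurd hp hax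
        | p + 1 =>
          simp only [List.getElem?_cons_succ] at hp
          exact Nat.succ_lt_succ (hall' p hp)
    · rw [List.filter_cons_of_neg hpa] at h
      obtain ⟨q', hq', hall'⟩ := ih h
      refine ⟨q' + 1, by simpa using hq', ?_⟩
      intro p hp
      match p with
      | 0 =>
        simp only [List.getElem?_cons_zero, Option.some_inj] at hp
        subst hp; exact absurd hx hpa
      | p + 1 =>
        simp only [List.getElem?_cons_succ] at hp
        exact Nat.succ_lt_succ (hall' p hp)

lemma rprec_filter {P : α → Bool} {x y : α} (hy : P y = true) :
    ∀ {w : List α}, RPrec (w.filter P) x y → RPrec w x y := by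
  intro w
  induction w with
  | nil => simp [RPrec]
  | cons a w ih =>
    intro h
    by_cases hpa : P a
    · rw [List.filter_cons_of_pos hpa] at h
      obtain ⟨p, hp, hall⟩ := h
      match p with
      | 0 =>
        simp only [List.getElem?_cons_zero, Option.some_inj] at hp
        subst hp
        -- x at position 0 of a :: filter w, all y before: so no y in filter w and a ≠ y... 
        -- in fact hall means: ∀ q, (a :: filter w)[q]? = some y → q < 0, i.e. no y at all.
        -- Then in a :: w: is there y later? Possibly! y ∈ w with P y true would appear in filter w.
        refine ⟨0, by simp, ?_⟩
        intro q hq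
        match q with
        | 0 => simp only [List.getElem?_cons_zero, Option.some_inj] at hq; subst hq
               exact absurd (hall 0 (by simp)) (by omega)
        | q + 1 =>
          simp only [List.getElem?_cons_succ] at hq
          have hyw : y ∈ w.filter P := List.mem_filter.2 ⟨mem_of_getElem?' hq, hy⟩
          obtain ⟨r, hr⟩ := List.mem_iff_getElem?.1 hyw
          exact absurd (hall (r + 1) (by simpa using hr)) (by omega)
      | p + 1 =>
        simp only [List.getElem?_cons_succ] at hp
        obtain ⟨p', hp', hall'⟩ := ih ⟨p, hp, fun q hq => by
          have := hall (q + 1) (by simpa using hq); omega⟩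
        refine ⟨p' + 1, by simpa using hp', ?_⟩
        intro q hq
        match q with
        | 0 => omega
        | q + 1 =>
          simp only [List.getElem?_cons_succ] at hq
          exact Nat.succ_lt_succ (hall' q hq)
    · rw [List.filter_cons_of_neg hpa] at h
      obtain ⟨p', hp', hall'⟩ := ih h
      refine ⟨p' + 1, by simpa using hp', ?_⟩
      intro q hq
      match q with
      | 0 =>
        simp only [List.getElem?_cons_zero, Option.some_inj] at hq
        subst hq; exact absurd hy hpa
      | q + 1 =>
        simp only [List.getElem?_cons_succ] at hq
        exact Nat.succ_lt_succ (hall' q hq)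

end helpers

section occ
variable {n : ℕ}

lemma occ_iff_nat {w : List (Fin n)} {i j : Fin n} :
    Occ w i j ↔ ∃ p q : ℕ, p < q ∧ w[p]? = some i ∧ w[q]? = some j := by
  constructor
  · rintro ⟨p, q, hpq, hp, hq⟩
    refine ⟨p, q, hpq, ?_, ?_⟩
    · rw [List.getElem?_eq_getElem p.isLt]; simp [← List.get_eq_getElem, hp]
    · rw [List.getElem?_eq_getElem q.isLt]; simp [← List.get_eq_getElem, hq]
  · rintro ⟨p, q, hpq, hp, hq⟩
    obtain ⟨hp', hpe⟩ := List.getElem?_eq_some_iff.1 hp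
    obtain ⟨hq', hqe⟩ := List.getElem?_eq_some_iff.1 hq
    exact ⟨⟨p, hp'⟩, ⟨q, hq'⟩, by simpa [Fin.lt_def], by simpa [List.get_eq_getElem], by simpa [List.get_eq_getElem]⟩

lemma occ_iff_sublist {w : List (Fin n)} {i j : Fin n} :
    Occ w i j ↔ List.Sublist [i, j] w := by
  rw [occ_iff_nat]
  constructor
  · rintro ⟨p, q, h1, h2, h3⟩; exact sublist_pair_of h1 h2 h3
  · exact pair_indices_of_sublist

lemma not_occ_lt {w : List (Fin n)} {i j : Fin n} (h : ¬ Occ w i j) (hne : i ≠ j)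
    {p q : ℕ} (hp : w[p]? = some i) (hq : w[q]? = some j) : q < p := by
  rcases lt_trichotomy p q with h' | h' | h'
  · exact absurd (occ_iff_nat.2 ⟨p, q, h', hp, hq⟩) h
  · subst h'; rw [hp] at hq; exact absurd (by simpa using hq) hne
  · exact h'

end occ

section transfer
variable {n : ℕ}

lemma occ_of_occ_filter {w : List (Fin n)} {P : Fin n → Bool} {i j : Fin n}
    (h : Occ (w.filter P) i j) : Occ w i j :=
  occ_iff_sublist.2 ((occ_iff_sublist.1 h).trans (List.filter_sublist (l := w)))

lemma occ_filter_of_occ {w : List (Fin n)} {P : Fin n → Bool} {i j : Fin n}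
    (hi : P i = true) (hj : P j = true) (h : Occ w i j) : Occ (w.filter P) i j := by
  have h' := (occ_iff_sublist.1 h).filter P
  rw [show [i, j].filter P = [i, j] by simp [List.filter, hi, hj]] at h'
  exact occ_iff_sublist.2 h'

variable {l₁ l₂ : List (Fin n)} {v u : Fin n}

lemma v_pos_unique (hv1 : v ∉ l₁) (hv2 : v ∉ l₂) {q : ℕ}
    (hq : (l₁ ++ v :: l₂)[q]? = some v) : q = l₁.length := by
  rcases lt_trichotomy q l₁.length with h | h | h
  · rw [List.getElem?_append, if_pos h] at hq
    exact absurd (mem_of_getElem?' hq) hv1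
  · exact h
  · rw [List.getElem?_append_right (by omega)] at hq
    have h1 : 1 ≤ q - l₁.length := by omega
    obtain ⟨r, hr⟩ : ∃ r, q - l₁.length = r + 1 := ⟨q - l₁.length - 1, by omega⟩
    rw [hr, List.getElem?_cons_succ] at hq
    exact absurd (mem_of_getElem?' hq) hv2

lemma occ_insert_left (hv1 : v ∉ l₁) (hv2 : v ∉ l₂) (hu : u ≠ v) :
    Occ (l₁ ++ v :: l₂) u v ↔ u ∈ l₁ := by
  constructor
  · intro h
    obtain ⟨p, q, hpq, hp, hq⟩ := occ_iff_nat.1 h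
    have hq' := v_pos_unique hv1 hv2 hq
    rw [List.getElem?_append, if_pos (by omega)] at hp
    exact mem_of_getElem?' hp
  · intro h
    obtain ⟨p, hp⟩ := List.mem_iff_getElem?.1 h
    have hplt : p < l₁.length := (List.getElem?_eq_some_iff.1 hp).1
    refine occ_iff_nat.2 ⟨p, l₁.length, hplt, ?_, ?_⟩
    · rw [List.getElem?_append, if_pos hplt]; exact hp
    · rw [List.getElem?_append_right le_rfl]; simp

lemma occ_insert_right (hv1 : v ∉ l₁) (hv2 : v ∉ l₂) (hu : u ≠ v) :
    Occ (l₁ ++ v :: l₂) v u ↔ u ∈ l₂ := by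
  constructor
  · intro h
    obtain ⟨p, q, hpq, hp, hq⟩ := occ_iff_nat.1 h
    have hp' := v_pos_unique hv1 hv2 hp
    rw [List.getElem?_append_right (by omega)] at hq
    obtain ⟨r, hr⟩ : ∃ r, q - l₁.length = r + 1 := ⟨q - l₁.length - 1, by omega⟩
    rw [hr, List.getElem?_cons_succ] at hq
    exact mem_of_getElem?' hq
  · intro h
    obtain ⟨r, hr⟩ := List.mem_iff_getElem?.1 h
    refine occ_iff_nat.2 ⟨l₁.length, l₁.length + (r + 1), by omega, ?_, ?_⟩
    · rw [List.getElem?_append_right le_rfl]; simp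
    · rw [List.getElem?_append_right (by omega)]
      rw [show l₁.length + (r + 1) - l₁.length = r + 1 by omega, List.getElem?_cons_succ]
      exact hr

lemma occ_insert_mid (hv1 : v ∉ l₁) (hv2 : v ∉ l₂) {i j : Fin n} (hi : i ≠ v) (hj : j ≠ v) :
    Occ (l₁ ++ v :: l₂) i j ↔ Occ (l₁ ++ l₂) i j := by
  constructor
  · intro h
    have h1 := (occ_iff_sublist.1 h).filter (fun x => x ≠ v)
    rw [show [i, j].filter (fun x => x ≠ v) = [i, j] by simp [List.filter, hi, hj]] at h1
    refine occ_iff_sublist.2 (h1.trans ?_)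
    rw [List.filter_append, List.filter_cons_of_neg (by simp)]
    exact List.Sublist.append (List.filter_sublist (l := l₁)) (List.filter_sublist (l := l₂))
  · intro h
    refine occ_iff_sublist.2 ((occ_iff_sublist.1 h).trans ?_)
    exact List.Sublist.append_left (List.sublist_cons_self v l₂) l₁

end transfer

section step
variable {n : ℕ}

lemma step (G : SimpleGraph (Fin n)) (w : List (Fin n)) (hw : Represents G w)
    (v : Fin n) (hgood : ¬ Bad G v) :
    ∃ w' : List (Fin n), Represents G w' ∧ w'.count v = 1 ∧
      ∀ u : Fin n, u ≠ v → w'.count u = w.count u := by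
  classical
  set w₀ := w.filter (fun x => x ≠ v) with hw₀def
  have hvnot : v ∉ w₀ := by simp [hw₀def]
  have hmem₀ : ∀ u : Fin n, u ≠ v → u ∈ w₀ := fun u hu => by
    simp [hw₀def, List.mem_filter, hw.1 u, hu]
  have occ₀ : ∀ i j : Fin n, i ≠ v → j ≠ v → (Occ w₀ i j ↔ Occ w i j) := by
    intro i j hi hj
    exact ⟨occ_of_occ_filter, occ_filter_of_occ (by simp [hi]) (by simp [hj])⟩
  have fact_adj_lt : ∀ {i j : Fin n}, i < j → G.Adj i j →
      ∀ p q : ℕ, w[p]? = some i → w[q]? = some j → q < p := by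
    intro i j hij hadj p q hp hq
    exact not_occ_lt ((hw.2 i j hij).1 hadj) (ne_of_lt hij) hp hq
  have fact_nadj_lt : ∀ {i j : Fin n}, i < j → ¬ G.Adj i j → Occ w i j := by
    intro i j hij hnadj
    by_contra h
    exact hnadj ((hw.2 i j hij).2 h)
  let P : ℕ → Prop := fun k =>
    (∀ u : Fin n, u < v → ¬ G.Adj u v → u ∈ w₀.take k) ∧
    (∀ u : Fin n, v < u → G.Adj v u → u ∉ w₀.drop k)
  have hPlen : P w₀.length := by
    constructor
    · intro u hu hn
      rw [List.take_length]
      exact hmem₀ u (ne_of_lt hu)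
    · intro u _ _
      rw [List.drop_length]
      exact List.not_mem_nil
  have hex : ∃ k, P k := ⟨w₀.length, hPlen⟩
  set k := Nat.find hex with hkdef
  have hk : P k := Nat.find_spec hex
  have hmin : ∀ m, m < k → ¬ P m := fun m hm => Nat.find_min hex hm
  have c1 := hk.1
  have c3 := hk.2
  -- condition (2)
  have c2 : ∀ y : Fin n, y < v → G.Adj y v → y ∉ w₀.take k := by
    intro y hyv hadj hyin
    obtain ⟨qy, hqy_lt, hqy⟩ := mem_take_iff.1 hyin
    match hkk : k with
    | 0 => omega
    | m + 1 =>
    have hnP := hmin m (by omega)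
    rw [not_and_or] at hnP
    rcases hnP with hL | hR
    · push_neg at hL
      obtain ⟨x, hxv, hxnadj, hxnot⟩ := hL
      have hxall : ∀ p : ℕ, w₀[p]? = some x → m ≤ p := by
        intro p hp
        by_contra h'
        exact hxnot (mem_take_iff.2 ⟨p, by omega, hp⟩)
      obtain ⟨px, hpx_lt, hpx⟩ := mem_take_iff.1 (c1 x hxv hxnadj)
      have hpxm : px = m := by have := hxall px hpx; omega
      have hyx : y ≠ x := fun h => hxnadj (h ▸ hadj)
      have hqym : qy < m := by
        rcases Nat.lt_or_ge qy m with h | h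
        · exact h
        · have heq : qy = m := by omega
          have h1 : w₀[m]? = some x := hpxm ▸ hpx
          rw [heq, h1] at hqy
          exact absurd (Option.some_inj.1 hqy).symm hyx
      have hxvne : x ≠ v := ne_of_lt hxv
      have hprec : Prec w y x := prec_filter (by simp [hxvne])
        (⟨qy, hqy, fun p hp => lt_of_lt_of_le hqym (hxall p hp)⟩ : Prec w₀ y x)
      obtain ⟨q, hq, hqall⟩ := hprec
      obtain ⟨p, r, hpr, hp, hr⟩ := occ_iff_nat.1 (fact_nadj_lt hxv hxnadj)
      have h1 : r < q := fact_adj_lt hyv hadj q r hq hr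
      have h2 : q < p := hqall p hp
      omega
    · push_neg at hR
      obtain ⟨x, hvx, hadjx, hxin⟩ := hR
      have hxnotdrop := c3 x hvx hadjx
      obtain ⟨px, hpx_ge, hpx⟩ := mem_drop_iff.1 hxin
      have hpx_lt : px < m + 1 := by
        by_contra h'
        exact hxnotdrop (mem_drop_iff.2 ⟨px, by omega, hpx⟩)
      have hpxm : px = m := by omega
      have hyx : y ≠ x := ne_of_lt (hyv.trans hvx)
      have hqym : qy < m := by
        rcases Nat.lt_or_ge qy m with h | h
        · exact h
        · have heq : qy = m := by omega
          have h1 : w₀[m]? = some x := hpxm ▸ hpx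
          rw [heq, h1] at hqy
          exact absurd (Option.some_inj.1 hqy).symm hyx
      have hOyx : Occ w y x := (occ₀ y x (ne_of_lt hyv) (ne_of_gt hvx)).1
        (occ_iff_nat.2 ⟨qy, m, hqym, hqy, hpxm ▸ hpx⟩)
      obtain ⟨q', p', hq'p', hq', hp'⟩ := occ_iff_nat.1 hOyx
      obtain ⟨r, hr⟩ := List.mem_iff_getElem?.1 (hw.1 v)
      have h1 : r < q' := fact_adj_lt hyv hadj q' r hq' hr
      have h2 : p' < r := fact_adj_lt hvx hadjx r p' hr hp'
      omega
  -- condition (4)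
  have c4 : ∀ y : Fin n, v < y → ¬ G.Adj v y → y ∈ w₀.drop k := by
    intro y hvy hnadjy
    by_contra hynot
    have hyall : ∀ q : ℕ, w₀[q]? = some y → q < k := by
      intro q hq
      by_contra h'
      exact hynot (mem_drop_iff.2 ⟨q, by omega, hq⟩)
    match hkk : k with
    | 0 =>
      exact hynot (by simpa using hmem₀ y (ne_of_gt hvy))
    | m + 1 =>
    have hnP := hmin m (by omega)
    rw [not_and_or] at hnP
    rcases hnP with hL | hR
    · push_neg at hL
      obtain ⟨x, hxv, hxnadj, hxnot⟩ := hL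
      have hxall : ∀ p : ℕ, w₀[p]? = some x → m ≤ p := by
        intro p hp
        by_contra h'
        exact hxnot (mem_take_iff.2 ⟨p, by omega, hp⟩)
      have hnOxy : ¬ Occ w₀ x y := by
        intro h
        obtain ⟨p, q, hpq, hp, hq⟩ := occ_iff_nat.1 h
        have := hxall p hp
        have := hyall q hq
        omega
      have hnOxyW : ¬ Occ w x y := fun h =>
        hnOxy ((occ₀ x y (ne_of_lt hxv) (ne_of_gt hvy)).2 h)
      have hadjxy : G.Adj x y := (hw.2 x y (hxv.trans hvy)).2 hnOxyW
      exact hgood ⟨x, y, hxv, hvy, hxnadj, hnadjy, hadjxy⟩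
    · push_neg at hR
      obtain ⟨x, hvx, hadjx, hxin⟩ := hR
      have hxnotdrop := c3 x hvx hadjx
      obtain ⟨px, hpx_ge, hpx⟩ := mem_drop_iff.1 hxin
      have hpxm : px = m := by
        by_contra h'
        rcases Nat.lt_or_ge px (m + 1) with h'' | h''
        · omega
        · exact hxnotdrop (mem_drop_iff.2 ⟨px, by omega, hpx⟩)
      have hyx : y ≠ x := fun h => hnadjy (h ▸ hadjx)
      have hyallm : ∀ q : ℕ, w₀[q]? = some y → q < m := by
        intro q hq
        have h1 := hyall q hq
        rcases Nat.lt_or_ge q m with h | h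
        · exact h
        · have heq : q = m := by omega
          have h2 : w₀[m]? = some x := hpxm ▸ hpx
          rw [heq, h2] at hq
          exact absurd (Option.some_inj.1 hq).symm hyx
      have hyvne : y ≠ v := ne_of_gt hvy
      have hrprec : RPrec w x y := rprec_filter (by simp [hyvne])
        (⟨m, hpxm ▸ hpx, hyallm⟩ : RPrec w₀ x y)
      obtain ⟨p, hp, hpall⟩ := hrprec
      obtain ⟨r, q', hrq', hr, hq'⟩ := occ_iff_nat.1 (fact_nadj_lt hvy hnadjy)
      have h1 : q' < p := hpall q' hq'
      have h2 : p < r := fact_adj_lt hvx hadjx r p hr hp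
      omega
  -- build w'
  have hv1 : v ∉ w₀.take k := fun h => hvnot ((List.take_sublist k w₀).mem h)
  have hv2 : v ∉ w₀.drop k := fun h => hvnot ((List.drop_sublist k w₀).mem h)
  refine ⟨w₀.take k ++ v :: w₀.drop k, ?_, ?_, ?_⟩
  · constructor
    · intro u
      by_cases hu : u = v
      · subst hu; simp
      · have := hmem₀ u hu
        rw [← List.take_append_drop k w₀] at this
        rcases List.mem_append.1 this with h | h
        · exact List.mem_append.2 (Or.inl h)
        · exact List.mem_append.2 (Or.inr (List.mem_cons_of_mem v h))
    · intro i j hij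
      by_cases hi : i = v
      · subst hi
        rw [occ_insert_right hv1 hv2 (ne_of_gt hij)]
        constructor
        · intro hadj hmem
          exact c3 j hij hadj hmem
        · intro h
          by_contra hnadj
          exact h (c4 j hij hnadj)
      · by_cases hj : j = v
        · subst hj
          rw [occ_insert_left hv1 hv2 hi]
          constructor
          · intro hadj hmem
            exact c2 i hij hadj hmem
          · intro h
            by_contra hnadj
            exact h (c1 i hij hnadj)
        · rw [occ_insert_mid hv1 hv2 hi hj]
          rw [show w₀.take k ++ w₀.drop k = w₀ from List.take_append_drop k w₀]
          rw [occ₀ i j hi hj]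
          exact hw.2 i j hij
  · rw [List.count_append, List.count_cons_self, List.count_eq_zero_of_not_mem hv1,
      List.count_eq_zero_of_not_mem hv2]
  · intro u hu
    rw [List.count_append, List.count_cons_of_ne hu.symm, ← List.count_append,
      List.take_append_drop]
    exact List.count_filter (by simp [hu])

end step

section final
variable {n : ℕ}

lemma length_eq_sum_count (w : List (Fin n)) : w.length = ∑ v : Fin n, w.count v := by
  rw [← List.sum_toFinset_count_eq_length w]
  apply Finset.sum_subset (Finset.subset_univ _)
  intro x _ hx
  exact List.count_eq_zero_of_not_mem (fun h => hx (List.mem_toFinset.2 h))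

lemma bad_two (G : SimpleGraph (Fin n)) (w : List (Fin n)) (hw : Represents G w)
    (v : Fin n) (hb : Bad G v) : 2 ≤ w.count v := by
  obtain ⟨a, c, hav, hvc, hnav, hnvc, hac⟩ := hb
  have hOav : Occ w a v := by by_contra h; exact hnav ((hw.2 a v hav).2 h)
  have hOvc : Occ w v c := by by_contra h; exact hnvc ((hw.2 v c hvc).2 h)
  have hnOac : ¬ Occ w a c := (hw.2 a c (hav.trans hvc)).1 hac
  obtain ⟨p₁, q₁, h₁, hp₁, hq₁⟩ := occ_iff_nat.1 hOav
  obtain ⟨q₂, r₂, h₂, hq₂, hr₂⟩ := occ_iff_nat.1 hOvc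
  have hca : r₂ < p₁ := not_occ_lt hnOac (G.ne_of_adj hac) hp₁ hr₂
  have hsub : List.Sublist [v, v] w := sublist_pair_of (show q₂ < q₁ by omega) hq₂ hq₁
  have := hsub.count_le v
  simpa using this

lemma loop (G : SimpleGraph (Fin n)) : ∀ N (w : List (Fin n)), w.length ≤ N →
    Represents G w → (∀ u, w.count u ≤ 2) →
    ∃ w', Represents G w' ∧ (∀ u, w'.count u ≤ 2) ∧ ∀ u, ¬ Bad G u → w'.count u = 1 := by
  intro N
  induction N with
  | zero =>
    intro w hlen hw h2
    refine ⟨w, hw, h2, fun u _ => ?_⟩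
    have hnil : w = [] := List.eq_nil_of_length_eq_zero (Nat.le_zero.1 hlen)
    exact absurd (hnil ▸ hw.1 u) List.not_mem_nil
  | succ N ih =>
    intro w hlen hw h2
    by_cases h : ∃ u, ¬ Bad G u ∧ 2 ≤ w.count u
    · obtain ⟨v, hv, hvc⟩ := h
      obtain ⟨w', hw', hc1, hcu⟩ := step G w hw v hv
      have hlt : w'.length < w.length := by
        rw [length_eq_sum_count, length_eq_sum_count]
        refine Finset.sum_lt_sum (fun u _ => ?_) ⟨v, Finset.mem_univ v, by rw [hc1]; omega⟩
        by_cases huv : u = v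
        · subst huv; rw [hc1]; omega
        · rw [hcu u huv]
      exact ih w' (by omega) hw' (fun u => by
        by_cases huv : u = v
        · subst huv; rw [hc1]; omega
        · rw [hcu u huv]; exact h2 u)
    · push_neg at h
      refine ⟨w, hw, h2, fun u hu => ?_⟩
      have h1 : 0 < w.count u := List.count_pos_iff.2 (hw.1 u)
      have := h u hu
      omega

end final

theorem stmt13 (n : ℕ) (G : SimpleGraph (Fin n)) [DecidablePred (Bad G)]
    (w : List (Fin n)) (hw : Represents G w) (h2 : ∀ v : Fin n, w.count v ≤ 2) :
    ∃ w' : List (Fin n), Represents G w' ∧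
      w'.length = n + (Finset.univ.filter (Bad G)).card ∧
      (∀ v : Fin n, Bad G v → w'.count v = 2) ∧
      (∀ v : Fin n, ¬ Bad G v → w'.count v = 1) := by
  classical
  obtain ⟨w', hw', h2', hgood⟩ := loop G w.length w le_rfl hw h2
  have hbad : ∀ u, Bad G u → w'.count u = 2 := fun u hb =>
    le_antisymm (h2' u) (bad_two G w' hw' u hb)
  refine ⟨w', hw', ?_, hbad, hgood⟩
  rw [length_eq_sum_count]
  have hcnt : ∀ u : Fin n, w'.count u = 1 + (if Bad G u then 1 else 0) := by
    intro u
    by_cases hb : Bad G u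
    · simp [hb, hbad u hb]
    · simp [hb, hgood u hb]
  rw [Finset.sum_congr rfl (fun u _ => hcnt u), Finset.sum_add_distrib,
    Finset.sum_const, smul_eq_mul, mul_one, ← Finset.card_filter]
  simp [Finset.card_univ]
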